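/- Let w : Fin (2n) → Bool assign to each point of a cyclic sequence of 2n points a label, such that the points are grouped into n non-crossing pairs (chords) and both points of each pair carry opposite orientations when traversed along a fixed simple closed curve. Then there exist two pairs that are adjacent in the cyclic order and traversed in opposite directions. -/

import Mathlib

/-- Signed version of the outermost argument (Lemma 3.5, Figure 4): given a
non-crossing perfect matching of `2n` cyclically ordered points labelled by
`w : Fin (2n) → Bool`, where matched points carry opposite labels (opposite
directions of traversal), there is a matched pair of cyclically adjacent points,
necessarily traversed in opposite directions. -/
theorem stmt_8 (n : ℕ) (hn : 1 ≤ n) (w : Fin (2 * n) → Bool)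
    (M : Fin (2 * n) → Fin (2 * n))
    (hinv : ∀ i, M (M i) = i) (hfix : ∀ i, M i ≠ i)
    (hopp : ∀ i, w (M i) = ! w i)
    (hnc : ¬ ∃ a b c d : Fin (2 * n),
      M a = b ∧ M c = d ∧ a < c ∧ c < b ∧ b < d) :
    ∃ i : Fin (2 * n), ((M i : ℕ) = ((i : ℕ) + 1) % (2 * n)) ∧ w (M i) = ! w i := by
  classical
  have h2n : 0 < 2 * n := by omega
  -- the set of left endpoints is nonempty
  have hne : ((Finset.univ.filter (fun i : Fin (2 * n) => i < M i)).Nonempty) := by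
    refine ⟨⟨0, h2n⟩, ?_⟩
    simp only [Finset.mem_filter, Finset.mem_univ, true_and]
    have := hfix ⟨0, h2n⟩
    have : (M ⟨0, h2n⟩ : ℕ) ≠ 0 := by
      intro h
      exact this (Fin.ext h)
    have hz : ((⟨0, h2n⟩ : Fin (2 * n)) : ℕ) = 0 := rfl
    exact Fin.lt_def.mpr (by omega)
  obtain ⟨i, hi, hmin⟩ := Finset.exists_min_image _ (fun i => (M i : ℕ) - (i : ℕ)) hne
  simp only [Finset.mem_filter, Finset.mem_univ, true_and] at hi
  have hilt : (i : ℕ) < (M i : ℕ) := hi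
  -- claim the gap is 1
  have hgap : (M i : ℕ) = (i : ℕ) + 1 := by
    by_contra hgt
    have hgt' : (i : ℕ) + 1 < (M i : ℕ) := by omega
    set j : Fin (2 * n) := ⟨(i : ℕ) + 1, lt_trans hgt' (M i).2⟩ with hj
    have hjval : (j : ℕ) = (i : ℕ) + 1 := rfl
    have hij : (i : ℕ) < (j : ℕ) := by omega
    have hjMi : (j : ℕ) < (M i : ℕ) := hgt'
    have hjne : (M j : ℕ) ≠ (j : ℕ) := fun h => hfix j (Fin.ext h)
    rcases lt_trichotomy ((M j : ℕ)) ((j : ℕ)) with hlt | heq | hgtj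
    · -- M j < j, so M j ≤ i; M j = i impossible
      have hMjnei : (M j : ℕ) ≠ (i : ℕ) := by
        intro h
        have : M j = i := Fin.ext h
        have : M i = j := by rw [← this, hinv]
        have : (M i : ℕ) = (j : ℕ) := by rw [this]
        omega
      have hMji : (M j : ℕ) < (i : ℕ) := by omega
      exact hnc ⟨M j, j, i, M i, hinv j, rfl, Fin.lt_def.mpr hMji,
        Fin.lt_def.mpr hij, Fin.lt_def.mpr hjMi⟩
    · exact hjne heq
    · -- j < M j
      rcases lt_trichotomy ((M j : ℕ)) ((M i : ℕ)) with h1 | h2 | h3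
      · -- smaller gap, contradicts minimality
        have hjmem : j ∈ Finset.univ.filter (fun k : Fin (2 * n) => k < M k) := by
          simp only [Finset.mem_filter, Finset.mem_univ, true_and]
          exact Fin.lt_def.mpr hgtj
        have := hmin j hjmem
        omega
      · have : M j = M i := Fin.ext h2
        have : j = i := by
          have := congrArg M this
          rwa [hinv, hinv] at this
        have : (j : ℕ) = (i : ℕ) := by rw [this]
        omega
      · -- crossing i < j < M i < M j
        exact hnc ⟨i, M i, j, M j, rfl, rfl, Fin.lt_def.mpr hij,
          Fin.lt_def.mpr hjMi, Fin.lt_def.mpr h3⟩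
  refine ⟨i, ?_, hopp i⟩
  have : (i : ℕ) + 1 < 2 * n := hgap ▸ (M i).2
  rw [hgap, Nat.mod_eq_of_lt this]
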